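/- Let F_q be a finite field and let A₂ = [[0, 1], [0, 0]] ∈ M₂(F_q). Then the number of solutions X ∈ M₂(F_q) of the Yang–Baxter matrix equation XA₂X = A₂XA₂ is exactly 2q² − q, i.e., |D_{A₂}(F_q)| = 2q² − q. -/

import Mathlib

theorem ybkey {F : Type*} [Field F] (X : Matrix (Fin 2) (Fin 2) F) :
    X * !![(0 : F), 1; 0, 0] * X = !![(0 : F), 1; 0, 0] * X * !![(0 : F), 1; 0, 0] ↔
      X 1 0 = 0 ∧ X 0 0 * X 1 1 = 0 := by
  rw [Matrix.eta_fin_two X]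
  rw [Matrix.mul_fin_two, Matrix.mul_fin_two, Matrix.mul_fin_two, Matrix.mul_fin_two]
  simp only [← Matrix.ext_iff, Fin.forall_fin_two, Matrix.cons_val', Matrix.cons_val_zero,
    Matrix.cons_val_one, Matrix.head_cons, Matrix.of_apply, Matrix.head_fin_const]
  ring_nf
  constructor
  · rintro ⟨⟨h1, h2⟩, h3, h4⟩
    have hc : X 1 0 = 0 := sq_eq_zero_iff.mp h3
    refine ⟨hc, ?_⟩
    rw [hc] at h2; exact h2
  · rintro ⟨hc, had⟩
    simp [hc, had]

theorem cardpairs {F : Type*} [Field F] [Fintype F] [DecidableEq F] :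
    Fintype.card {p : F × F // p.1 * p.2 = 0} = 2 * Fintype.card F - 1 := by
  rw [Fintype.card_subtype]
  have : (Finset.univ.filter fun p : F × F => p.1 * p.2 = 0)
      = ({0} ×ˢ Finset.univ) ∪ (Finset.univ ×ˢ {0}) := by
    ext p
    simp [mul_eq_zero, Prod.ext_iff, eq_comm]
  rw [this, Finset.card_union]
  have h2 : ({0} ×ˢ Finset.univ) ∩ (Finset.univ ×ˢ ({0} : Finset F)) = {((0 : F), (0 : F))} := by
    ext p
    simp [Prod.ext_iff, eq_comm]
  rw [h2]
  simp [Finset.card_product, two_mul]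

/-- For `A₂ = [[0, 1], [0, 0]]` over a finite field of order `q`, the Yang–Baxter
matrix equation `X A₂ X = A₂ X A₂` has exactly `2q² − q` solutions. -/
theorem stmt_9 {F : Type*} [Field F] [Fintype F] :
    Nat.card {X : Matrix (Fin 2) (Fin 2) F |
        X * !![(0 : F), 1; 0, 0] * X = !![(0 : F), 1; 0, 0] * X * !![(0 : F), 1; 0, 0]} =
      2 * Fintype.card F ^ 2 - Fintype.card F := by
  classical
  have e : {X : Matrix (Fin 2) (Fin 2) F |
        X * !![(0 : F), 1; 0, 0] * X = !![(0 : F), 1; 0, 0] * X * !![(0 : F), 1; 0, 0]} ≃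
      F × {p : F × F // p.1 * p.2 = 0} :=
    { toFun := fun X => (X.1 0 1, ⟨(X.1 0 0, X.1 1 1), ((ybkey X.1).mp X.2).2⟩)
      invFun := fun p => ⟨!![p.2.1.1, p.1; 0, p.2.1.2],
        (ybkey _).mpr ⟨by simp, by simpa using p.2.2⟩⟩
      left_inv := fun X => by
        have hc := ((ybkey X.1).mp X.2).1
        ext i j
        fin_cases i <;> fin_cases j <;> simp [hc.symm]
      right_inv := fun p => by
        ext <;> simp }
  rw [Nat.card_congr e, Nat.card_prod, Nat.card_eq_fintype_card,
    (Nat.card_eq_fintype_card.trans cardpairs : Nat.card {p : F × F // p.1 * p.2 = 0} = _),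
    Nat.mul_sub, mul_one, pow_two]
  ring_nf
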